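/- Let P = (P1, P2) be an index pair for an isolated invariant set S of a combinatorial multivector field on a finite topological space. Then P1 isolates S: P1 is closed, S ⊆ P1, every path in P1 with endpoints in S lies in S, and Π_V(S) ⊆ P1. -/

import Mathlib

open CategoryTheory Limits

/-- A set is locally closed if it is the intersection of an open set and a closed set. -/
def IsLC {X : Type*} [TopologicalSpace X] (A : Set X) : Prop :=
  ∃ U C : Set X, IsOpen U ∧ IsClosed C ∧ A = U ∩ C

/-- The singular chain complex functor: the free abelian group on the singular
simplicial set, with the alternating face map differential. -/
noncomputable def singularChainsFunctor : TopCat ⥤ ChainComplex AddCommGrpCat ℕ :=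
  TopCat.toSSet ⋙ ((SimplicialObject.whiskering _ _).obj AddCommGrpCat.free) ⋙
    AlgebraicTopology.alternatingFaceMapComplex AddCommGrpCat

/-- Relative singular homology `H_n(A, B)` of a pair of subsets `B ⊆ A` of a topological
space: the homology of the quotient (cokernel) of singular chains of `B` in those of `A`. -/
noncomputable def relSingularHomology (X : Type) [TopologicalSpace X]
    (A B : Set X) (h : B ⊆ A) (n : ℕ) : AddCommGrpCat :=
  (Limits.cokernel (singularChainsFunctor.map
      (TopCat.ofHom ⟨Set.inclusion h, continuous_inclusion h⟩ : TopCat.of B ⟶ TopCat.of A))).homology n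

/-- A combinatorial multivector field on `X`: a partition of `X` into nonempty locally
closed sets, encoded by the map sending `x` to the multivector `[x]_V` containing it. -/
structure MVField (X : Type) [TopologicalSpace X] where
  mv : X → Set X
  self_mem : ∀ x, x ∈ mv x
  mv_eq : ∀ x y, y ∈ mv x → mv y = mv x
  lc : ∀ x, IsLC (mv x)

variable {X : Type} [TopologicalSpace X]

/-- The multivalued map `Π_V(x) = cl {x} ∪ [x]_V` induced by a multivector field. -/
def MVField.Pi (V : MVField X) (x : X) : Set X := closure {x} ∪ V.mv x

/-- A multivector is regular if the relative singular homology `H(cl V, mo V)` vanishes;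
`x` is regular if its multivector `[x]_V` is regular. -/
def MVField.IsRegular (V : MVField X) (x : X) : Prop :=
  ∀ n, IsZero (relSingularHomology X (closure (V.mv x))
    (closure (V.mv x) \ V.mv x) Set.diff_subset n)

/-- A full solution of the combinatorial dynamical system `Π_V`. -/
def MVField.IsSol (V : MVField X) (φ : ℤ → X) : Prop := ∀ t, φ (t + 1) ∈ V.Pi (φ t)

/-- An essential solution: a full solution which, whenever it is in a regular
multivector, leaves this multivector both in forward and in backward time. -/
def MVField.IsEssential (V : MVField X) (φ : ℤ → X) : Prop :=
  V.IsSol φ ∧ ∀ t, V.IsRegular (φ t) →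
    (∀ m, ∃ k, m ≤ k ∧ φ k ∉ V.mv (φ t)) ∧ (∀ m, ∃ k, k ≤ m ∧ φ k ∉ V.mv (φ t))

/-- The invariant part of `A`: points of `A` through which an essential solution in `A`
passes. -/
def MVField.InvPart (V : MVField X) (A : Set X) : Set X :=
  {x ∈ A | ∃ φ : ℤ → X, V.IsEssential φ ∧ φ 0 = x ∧ Set.range φ ⊆ A}

/-- `S` is invariant if it coincides with its invariant part. -/
def MVField.IsInvariant (V : MVField X) (S : Set X) : Prop := V.InvPart S = S

/-- `γ : ℕ → X` is (up to index `n`) a path of `Π_V` contained in `N`. -/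
def MVField.IsPathIn (V : MVField X) (N : Set X) (n : ℕ) (γ : ℕ → X) : Prop :=
  (∀ i ≤ n, γ i ∈ N) ∧ ∀ i < n, γ (i + 1) ∈ V.Pi (γ i)

/-- A closed set `N` isolates `S`: `S ⊆ N`, every path in `N` with endpoints in `S` is a
path in `S`, and `Π_V(S) ⊆ N`. -/
def MVField.Isolates (V : MVField X) (N S : Set X) : Prop :=
  IsClosed N ∧ S ⊆ N ∧
    (∀ n γ, V.IsPathIn N n γ → γ 0 ∈ S → γ n ∈ S → ∀ i ≤ n, γ i ∈ S) ∧
    ∀ x ∈ S, V.Pi x ⊆ N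

/-- An isolated invariant set: an invariant set admitting a closed isolating set. -/
def MVField.IsIsolatedInvariant (V : MVField X) (S : Set X) : Prop :=
  V.IsInvariant S ∧ ∃ N, V.Isolates N S

/-- `A` is `V`-compatible if every multivector is disjoint from `A` or contained in it. -/
def MVField.IsCompatible (V : MVField X) (A : Set X) : Prop :=
  ∀ x : X, V.mv x ∩ A = ∅ ∨ V.mv x ⊆ A

/-- `(P1, P2)` is an index pair for `S`: closed sets `P2 ⊆ P1` with positive invariance
of `P2` relative to `P1`, the exit set condition, and `S = Inv(P1 \ P2)`. -/
def MVField.IndexPair (V : MVField X) (S P1 P2 : Set X) : Prop :=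
  IsClosed P1 ∧ IsClosed P2 ∧ P2 ⊆ P1 ∧
    (∀ x ∈ P2, ∀ y ∈ V.Pi x ∩ P1, y ∈ P2) ∧
    (∀ x ∈ P1, (V.Pi x \ P1).Nonempty → x ∈ P2) ∧
    S = V.InvPart (P1 \ P2)


private lemma regular_congr {X : Type} [TopologicalSpace X] (V : MVField X) {x y : X}
    (h : V.mv x = V.mv y) (hx : V.IsRegular x) : V.IsRegular y := by
  unfold MVField.IsRegular at *
  simp only [← h]
  exact hx

private lemma essential_shift {X : Type} [TopologicalSpace X] (V : MVField X)
    {φ : ℤ → X} (h : V.IsEssential φ) (c : ℤ) : V.IsEssential (fun t => φ (t + c)) := by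
  obtain ⟨hsol, hess⟩ := h
  constructor
  · intro t
    show φ (t + 1 + c) ∈ V.Pi (φ (t + c))
    rw [show t + 1 + c = t + c + 1 by ring]
    exact hsol (t + c)
  · intro t hreg
    obtain ⟨hf, hb⟩ := hess (t + c) hreg
    constructor
    · intro m
      obtain ⟨k, hk1, hk2⟩ := hf (m + c)
      refine ⟨k - c, by omega, ?_⟩
      show φ (k - c + c) ∉ _
      rw [show k - c + c = k by ring]
      exact hk2
    · intro m
      obtain ⟨k, hk1, hk2⟩ := hb (m + c)
      refine ⟨k - c, by omega, ?_⟩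
      show φ (k - c + c) ∉ _
      rw [show k - c + c = k by ring]
      exact hk2

/-- If `(P1, P2)` is an index pair for an isolated invariant set `S`, then `P1`
isolates `S`. -/
theorem stmt15 {X : Type} [TopologicalSpace X] [Finite X] (V : MVField X)
    (S P1 P2 : Set X) (hS : V.IsIsolatedInvariant S) (hP : V.IndexPair S P1 P2) :
    V.Isolates P1 S := by
  obtain ⟨hP1, hP2, hsub, hIP1, hIP2, hSeq⟩ := hP
  have hSsub : S ⊆ P1 \ P2 := by
    rw [hSeq]; exact fun x hx => hx.1
  refine ⟨hP1, fun x hx => (hSsub hx).1, ?_, ?_⟩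
  · -- path condition
    intro n γ hγ h0 hn i hi
    have hprop : ∀ d j, j + d = n → γ j ∈ P2 → γ n ∈ P2 := by
      intro d
      induction d with
      | zero => intro j hj h; rw [← hj]; simpa using h
      | succ d ih =>
        intro j hj h
        have hj1 : γ (j + 1) ∈ P2 :=
          hIP1 (γ j) h (γ (j + 1)) ⟨hγ.2 j (by omega), hγ.1 (j + 1) (by omega)⟩
        exact ih (j + 1) (by omega) hj1
    have hmem : ∀ j ≤ n, γ j ∈ P1 \ P2 := by
      intro j hj
      refine ⟨hγ.1 j hj, fun hP2' => ?_⟩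
      exact (hSsub hn).2 (hprop (n - j) j (by omega) hP2')
    rw [hSeq] at h0 hn
    obtain ⟨-, φ, hφ, hφ0, hφr⟩ := h0
    obtain ⟨-, ψ, hψ, hψ0, hψr⟩ := hn
    set χ : ℤ → X := fun t => if t ≤ 0 then φ t else if t ≤ (n : ℤ) then γ t.toNat else ψ (t - n)
      with hχdef
    have hχ1 : ∀ t : ℤ, t ≤ 0 → χ t = φ t := fun t ht => if_pos ht
    have hχ2 : ∀ t : ℤ, 0 ≤ t → t ≤ (n : ℤ) → χ t = γ t.toNat := by
      intro t ht htn
      by_cases h0t : t ≤ 0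
      · have ht0 : t = 0 := le_antisymm h0t ht
        subst ht0
        show (if (0:ℤ) ≤ 0 then φ 0 else _) = _
        rw [if_pos le_rfl, hφ0]
        norm_num
      · show (if t ≤ 0 then φ t else _) = _
        rw [if_neg h0t, if_pos htn]
    have hχ3 : ∀ t : ℤ, (n : ℤ) ≤ t → χ t = ψ (t - n) := by
      intro t hnt
      by_cases h2 : t ≤ (n : ℤ)
      · have ht : t = (n : ℤ) := le_antisymm h2 hnt
        subst ht
        rw [hχ2 (n : ℤ) (by omega) le_rfl]
        simp only [Int.toNat_natCast, sub_self]
        rw [hψ0]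
      · show (if t ≤ 0 then φ t else _) = _
        rw [if_neg (by omega), if_neg h2]
    have hχsol : V.IsSol χ := by
      intro t
      rcases le_or_gt (t + 1) 0 with h | h
      · rw [hχ1 t (by omega), hχ1 (t + 1) h]
        exact hφ.1 t
      · rcases le_or_gt (t + 1) (n : ℤ) with h2 | h2
        · rw [hχ2 t (by omega) (by omega), hχ2 (t + 1) (by omega) h2]
          rw [show (t + 1).toNat = t.toNat + 1 by omega]
          exact hγ.2 t.toNat (by omega)
        · rw [hχ3 t (by omega), hχ3 (t + 1) (by omega)]
          rw [show t + 1 - (n : ℤ) = (t - n) + 1 by ring]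
          exact hψ.1 (t - n)
    have hχess : V.IsEssential χ := by
      refine ⟨hχsol, fun t hreg => ⟨?_, ?_⟩⟩
      · intro m
        by_cases hcase : ∃ k, max m (n : ℤ) ≤ k ∧ χ k ∉ V.mv (χ t)
        · obtain ⟨k, hk, hk2⟩ := hcase
          exact ⟨k, le_trans (le_max_left _ _) hk, hk2⟩
        · push_neg at hcase
          have hmem' : χ (max m (n : ℤ)) ∈ V.mv (χ t) := hcase _ le_rfl
          have heq : χ (max m (n : ℤ)) = ψ (max m (n : ℤ) - n) := hχ3 _ (le_max_right _ _)
          have hmv : V.mv (ψ (max m (n : ℤ) - n)) = V.mv (χ t) := V.mv_eq _ _ (heq ▸ hmem')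
          have hregψ : V.IsRegular (ψ (max m (n : ℤ) - n)) := regular_congr V hmv.symm hreg
          obtain ⟨k, hk1, hk2⟩ := (hψ.2 _ hregψ).1 (max m (n : ℤ) - n)
          refine ⟨k + n, by omega, ?_⟩
          rw [hχ3 (k + n) (by omega), show k + (n : ℤ) - n = k by ring, ← hmv]
          exact hk2
      · intro m
        by_cases hcase : ∃ k, k ≤ min m 0 ∧ χ k ∉ V.mv (χ t)
        · obtain ⟨k, hk, hk2⟩ := hcase
          exact ⟨k, le_trans hk (min_le_left _ _), hk2⟩
        · push_neg at hcase
          have hmem' : χ (min m 0) ∈ V.mv (χ t) := hcase _ le_rfl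
          have heq : χ (min m 0) = φ (min m 0) := hχ1 _ (min_le_right _ _)
          have hmv : V.mv (φ (min m 0)) = V.mv (χ t) := V.mv_eq _ _ (heq ▸ hmem')
          have hregφ : V.IsRegular (φ (min m 0)) := regular_congr V hmv.symm hreg
          obtain ⟨k, hk1, hk2⟩ := (hφ.2 _ hregφ).2 (min m 0)
          refine ⟨k, by omega, ?_⟩
          rw [hχ1 k (by omega), ← hmv]
          exact hk2
    have hχr : ∀ t : ℤ, χ t ∈ P1 \ P2 := by
      intro t
      rcases le_or_gt t 0 with h | h
      · rw [hχ1 t h]; exact hφr (Set.mem_range_self _)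
      · rcases le_or_gt t (n : ℤ) with h2 | h2
        · rw [hχ2 t h.le h2]; exact hmem _ (by omega)
        · rw [hχ3 t h2.le]; exact hψr (Set.mem_range_self _)
    rw [hSeq]
    refine ⟨hmem i hi, fun t => χ (t + i), essential_shift V hχess i, ?_, ?_⟩
    · show χ (0 + (i : ℤ)) = γ i
      rw [zero_add, hχ2 (i : ℤ) (by omega) (by omega)]
      simp
    · intro y hy
      obtain ⟨t, rfl⟩ := hy
      exact hχr _
  · -- Π_V(S) ⊆ P1
    intro x hx y hy
    by_contra hyP1
    exact (hSsub hx).2 (hIP2 x (hSsub hx).1 ⟨y, hy, hyP1⟩)
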